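/- Suppose c₁, c₂, d₁, d₂ ∈ ℤ with c₁ - c₂ > d₁ - d₂ ≥ 0, and set a = c₁ - c₂ - d₁ + d₂ > 0. If (λ, μ) satisfies B(λ)+(c₁-c₂) ⊇ B(μ) and B(λ)+(d₁-d₂) ⊇ B(μ), then μ has at most d₁ - d₂ hooks of length a. -/

import Mathlib

/-- A partition: a weakly decreasing sequence of non-negative integers,
with finitely many nonzero terms (indices are 0-based; `parts i` is `λ_{i+1}`). -/
structure Partition' where
  parts : ℕ → ℕ
  antitone : ∀ i j : ℕ, i ≤ j → parts j ≤ parts i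
  finite_support : ∃ N : ℕ, ∀ i : ℕ, N ≤ i → parts i = 0

/-- The beta-set `B(λ) = {λ_a - a : a ≥ 1}` of a partition. -/
def betaSet (lam : Partition') : Set ℤ :=
  Set.range fun i : ℕ => (lam.parts i : ℤ) - (i + 1)

/-- The shifted set `S + c`. -/
def shiftSet (S : Set ℤ) (c : ℤ) : Set ℤ := (fun x => x + c) '' S

/-- The number of hooks of length `a` (an integer) in `λ`, via beta-sets. -/
noncomputable def hkZ (lam : Partition') (a : ℤ) : ℕ :=
  {b : ℤ | b ∈ betaSet lam ∧ b - a ∉ betaSet lam}.ncard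

namespace StmtAux

/-- The sequence whose range is the shifted beta set. -/
def g (lam : Partition') (c : ℤ) (i : ℕ) : ℤ := (lam.parts i : ℤ) - (i + 1) + c

lemma g_strictAnti (lam : Partition') (c : ℤ) : StrictAnti (g lam c) := by
  apply strictAnti_nat_of_succ_lt
  intro n
  have h := lam.antitone n (n + 1) (Nat.le_succ n)
  simp only [g]
  push_cast
  omega

lemma shift_eq_range (lam : Partition') (c : ℤ) :
    shiftSet (betaSet lam) c = Set.range (g lam c) := by
  ext x
  constructor
  · rintro ⟨y, ⟨i, rfl⟩, rfl⟩
    exact ⟨i, rfl⟩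
  · rintro ⟨i, rfl⟩
    exact ⟨(lam.parts i : ℤ) - (i + 1), ⟨i, rfl⟩, rfl⟩

lemma beta_eq_range (lam : Partition') :
    betaSet lam = Set.range (g lam 0) := by
  have : betaSet lam = shiftSet (betaSet lam) 0 := by
    simp [shiftSet]
  rw [this, shift_eq_range]

lemma shift_inter (lam : Partition') (c : ℤ) (hc : 0 ≤ c) (N : ℕ)
    (hN : ∀ i, N ≤ i → lam.parts i = 0) (n : ℕ) (hn : N ≤ n) :
    shiftSet (betaSet lam) c ∩ Set.Ici (-(n : ℤ)) = g lam c '' Set.Iio (n + c.toNat) := by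
  rw [shift_eq_range]
  ext x
  constructor
  · rintro ⟨⟨i, rfl⟩, hx⟩
    refine ⟨i, ?_, rfl⟩
    simp only [Set.mem_Iio]
    by_contra h
    push_neg at h
    have hiN : N ≤ i := le_trans hn (le_trans (Nat.le_add_right _ _) h)
    have h0 := hN i hiN
    simp only [Set.mem_Ici, g, h0] at hx
    have : (c.toNat : ℤ) = c := Int.toNat_of_nonneg hc
    push_cast at hx h
    omega
  · rintro ⟨i, hi, rfl⟩
    refine ⟨⟨i, rfl⟩, ?_⟩
    simp only [Set.mem_Iio] at hi
    simp only [Set.mem_Ici, g]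
    have h0 : (0 : ℤ) ≤ (lam.parts i : ℤ) := Int.natCast_nonneg _
    have : (c.toNat : ℤ) = c := Int.toNat_of_nonneg hc
    push_cast at hi
    omega

lemma shift_inter_ncard (lam : Partition') (c : ℤ) (hc : 0 ≤ c) (N : ℕ)
    (hN : ∀ i, N ≤ i → lam.parts i = 0) (n : ℕ) (hn : N ≤ n) :
    (shiftSet (betaSet lam) c ∩ Set.Ici (-(n : ℤ))).ncard = n + c.toNat := by
  rw [shift_inter lam c hc N hN n hn,
    Set.ncard_image_of_injective _ (g_strictAnti lam c).injective,
    ← Finset.coe_range, Set.ncard_coe_finset, Finset.card_range]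

lemma shift_inter_finite (lam : Partition') (c : ℤ) (hc : 0 ≤ c) (N : ℕ)
    (hN : ∀ i, N ≤ i → lam.parts i = 0) (n : ℕ) (hn : N ≤ n) :
    (shiftSet (betaSet lam) c ∩ Set.Ici (-(n : ℤ))).Finite := by
  rw [shift_inter lam c hc N hN n hn]
  exact (Set.finite_Iio _).image _

lemma low_mem (mu : Partition') (N : ℕ) (hN : ∀ i, N ≤ i → mu.parts i = 0)
    (x : ℤ) (hx : x < -(N : ℤ)) : x ∈ betaSet mu := by
  refine ⟨(-x - 1).toNat, ?_⟩
  have h1 : ((-x - 1).toNat : ℤ) = -x - 1 := Int.toNat_of_nonneg (by omega)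
  have h2 : N ≤ (-x - 1).toNat := by omega
  show (mu.parts (-x - 1).toNat : ℤ) - ((-x - 1).toNat + 1) = x
  rw [hN _ h2]
  push_cast [h1]
  omega

end StmtAux

/-- if `c₁ - c₂ > d₁ - d₂ ≥ 0`, `a = c₁ - c₂ - d₁ + d₂ > 0`, and
`B(λ)+(c₁-c₂) ⊇ B(μ)` and `B(λ)+(d₁-d₂) ⊇ B(μ)`, then `μ` has at most
`d₁ - d₂` hooks of length `a`. -/
theorem stmt_7 (c₁ c₂ d₁ d₂ : ℤ) (h1 : d₁ - d₂ < c₁ - c₂) (h2 : 0 ≤ d₁ - d₂)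
    (lam mu : Partition')
    (hc : betaSet mu ⊆ shiftSet (betaSet lam) (c₁ - c₂))
    (hd : betaSet mu ⊆ shiftSet (betaSet lam) (d₁ - d₂)) :
    (hkZ mu (c₁ - c₂ - d₁ + d₂) : ℤ) ≤ d₁ - d₂ := by
  classical
  set c : ℤ := c₁ - c₂ with hcdef
  set d : ℤ := d₁ - d₂ with hddef
  set a : ℤ := c₁ - c₂ - d₁ + d₂ with hadef
  obtain ⟨Nl, hNl⟩ := lam.finite_support
  obtain ⟨Nm, hNm⟩ := mu.finite_support
  set n : ℕ := max Nl Nm with hndef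
  -- the difference set
  set D : Set ℤ := shiftSet (betaSet lam) d \ betaSet mu with hDdef
  have hmu0 : ∀ i, Nm ≤ i → mu.parts i = 0 := hNm
  -- D ⊆ Ici (-n)
  have hDsub : D ⊆ Set.Ici (-(n : ℤ)) := by
    intro x hx
    by_contra h
    simp only [Set.mem_Ici, not_le] at h
    have : x < -(Nm : ℤ) := by
      have : (Nm : ℤ) ≤ (n : ℤ) := by exact_mod_cast le_max_right Nl Nm
      omega
    exact hx.2 (StmtAux.low_mem mu Nm hmu0 x this)
  -- rewrite betaSet mu as an intersection: B(μ) = shiftSet (B(μ)) 0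
  have hmu_shift : betaSet mu = shiftSet (betaSet mu) 0 := by
    simp [shiftSet]
  have hAfin := StmtAux.shift_inter_finite lam d h2 Nl hNl n (le_max_left _ _)
  have hAcard := StmtAux.shift_inter_ncard lam d h2 Nl hNl n (le_max_left _ _)
  have hBcard : (betaSet mu ∩ Set.Ici (-(n : ℤ))).ncard = n := by
    rw [hmu_shift]
    have := StmtAux.shift_inter_ncard mu 0 le_rfl Nm hmu0 n (le_max_right _ _)
    simpa using this
  -- D as a diff of the truncated sets
  have hDeq : D = (shiftSet (betaSet lam) d ∩ Set.Ici (-(n : ℤ)))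
      \ (betaSet mu ∩ Set.Ici (-(n : ℤ))) := by
    ext x
    constructor
    · intro hx
      have hxIci := hDsub hx
      exact ⟨⟨hx.1, hxIci⟩, fun h => hx.2 h.1⟩
    · rintro ⟨⟨h1', h2'⟩, h3'⟩
      exact ⟨h1', fun h => h3' ⟨h, h2'⟩⟩
  have hsubBA : betaSet mu ∩ Set.Ici (-(n : ℤ)) ⊆
      shiftSet (betaSet lam) d ∩ Set.Ici (-(n : ℤ)) := by
    exact Set.inter_subset_inter_left _ hd
  have hDfin : D.Finite := by
    rw [hDeq]; exact hAfin.diff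
  have hDcard : D.ncard = d.toNat := by
    rw [hDeq, Set.ncard_diff hsubBA (hAfin.subset hsubBA), hAcard, hBcard]
    omega
  -- the hook set injects into D via b ↦ b - a
  set H : Set ℤ := {b : ℤ | b ∈ betaSet mu ∧ b - a ∉ betaSet mu} with hHdef
  have himg : (fun b => b - a) '' H ⊆ D := by
    rintro x ⟨b, hb, rfl⟩
    obtain ⟨y, hy, hyb⟩ := hc hb.1
    refine ⟨⟨y, hy, ?_⟩, hb.2⟩
    show y + d = b - a
    simp only at hyb
    omega
  have hinj : Function.Injective (fun b : ℤ => b - a) := fun x y h => by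
    simpa using sub_left_injective h
  have hle : H.ncard ≤ d.toNat := by
    calc H.ncard = ((fun b => b - a) '' H).ncard :=
          (Set.ncard_image_of_injective _ hinj).symm
      _ ≤ D.ncard := Set.ncard_le_ncard himg hDfin
      _ = d.toNat := hDcard
  have : hkZ mu a = H.ncard := rfl
  rw [this] at *
  have := Int.toNat_of_nonneg h2
  omega
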